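/- Let x₁,…,x_n be the vertex order of a non-crossing Hamiltonian path on n points in convex position. Removing x₁ and x_n from the cyclic order splits the remaining vertices into two arcs (the 'top' and 'bottom' parts); then every edge {x_i, x_{i+1}} of the path is either a border edge (joining two cyclically consecutive vertices) or has one endpoint in the closed top part and the other in the closed bottom part. -/

import Mathlib

open Finset

/-- An edge (chord) on `n` points in convex position, as an unordered pair of indices. -/
abbrev Edge (n : ℕ) := Sym2 (Fin n)

/-- The cyclic successor of a point. -/
def next {n : ℕ} (i : Fin n) : Fin n := ⟨((i : ℕ) + 1) % n, Nat.mod_lt _ i.pos⟩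


/-- Chords `{a,b}` (with `a<b`) and `{c,d}` (with `c<d`) cross iff
`a<c<b<d` or `c<a<d<b`. -/
def Cross {n : ℕ} (e f : Edge n) : Prop :=
  ∃ a b c d : Fin n, e = s(a, b) ∧ f = s(c, d) ∧ a < b ∧ c < d ∧
    ((a < c ∧ c < b ∧ b < d) ∨ (c < a ∧ a < d ∧ d < b))

/-- A set of chords is non-crossing if no two of its chords cross. -/
def NonCrossing {n : ℕ} (E : Finset (Edge n)) : Prop :=
  ∀ e ∈ E, ∀ f ∈ E, ¬ Cross e f

/-- A border edge joins two cyclically consecutive points (this includes `{n-1, 0}`,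
i.e. `{v_n, v_1}`, since addition in `Fin n` wraps around). -/
def IsBorder {n : ℕ} (e : Edge n) : Prop := ∃ i : Fin n, e = s(i, next i)

/-- A spanning tree on the `n` points, given by its edge set: loopless, connected,
with `n - 1` edges. -/
def IsSpanningTree {n : ℕ} (T : Finset (Edge n)) : Prop :=
  (SimpleGraph.fromEdgeSet (T : Set (Edge n))).Connected ∧
    T.card = n - 1 ∧ ∀ e ∈ T, ¬ e.IsDiag

/-- A non-crossing spanning tree. -/
def NCST {n : ℕ} (T : Finset (Edge n)) : Prop := IsSpanningTree T ∧ NonCrossing T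

/-- A flip removes one edge and adds another so that the result is again a
non-crossing spanning tree. -/
def Flip {n : ℕ} (T T' : Finset (Edge n)) : Prop :=
  NCST T ∧ NCST T' ∧ ∃ e ∈ T, ∃ f, f ∉ T ∧ T' = insert f (T.erase e)

/-- A flip sequence of length `k` from `T₁` to `T₂`. -/
def FlipSeq {n : ℕ} (T₁ T₂ : Finset (Edge n)) (k : ℕ) : Prop :=
  ∃ f : ℕ → Finset (Edge n), f 0 = T₁ ∧ f k = T₂ ∧ ∀ i < k, Flip (f i) (f (i + 1))

/-- There is a flip sequence from `T₁` to `T₂` of length at most `m`. -/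
def FlipDistLE {n : ℕ} (T₁ T₂ : Finset (Edge n)) (m : ℕ) : Prop :=
  ∃ k ≤ m, FlipSeq T₁ T₂ k

/-- `v` lies on the (closed) cyclic arc from `p` to `q` (going in increasing direction). -/
def InArc {n : ℕ} (p q v : Fin n) : Prop :=
  if p ≤ q then (p ≤ v ∧ v ≤ q) else (p ≤ v ∨ v ≤ q)

private lemma exists_exit_bwd (f : ℕ → Prop) :
    ∀ t, ¬ f 0 → f t → ∃ j, j < t ∧ ¬ f j ∧ f (j + 1) := by
  intro t
  induction t with
  | zero => intro h h'; exact absurd h' h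
  | succ t ih =>
    intro h0 h
    by_cases ht : f t
    · obtain ⟨j, h1, h2, h3⟩ := ih h0 ht
      exact ⟨j, by omega, h2, h3⟩
    · exact ⟨t, by omega, ht, h⟩

private lemma exists_exit_fwd (f : ℕ → Prop) :
    ∀ d t, f t → ¬ f (t + d) → ∃ k, t ≤ k ∧ k < t + d ∧ f k ∧ ¬ f (k + 1) := by
  intro d
  induction d with
  | zero => intro t h h'; exact absurd h h'
  | succ d ih =>
    intro t h h'
    by_cases hd : f (t + d)
    · exact ⟨t + d, by omega, by omega, hd, by rwa [show t + d + 1 = t + (d + 1) by omega]⟩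
    · obtain ⟨k, h1, h2, h3, h4⟩ := ih t h hd
      exact ⟨k, h1, by omega, h3, h4⟩

private lemma inArc_iff {n : ℕ} (p q v : Fin n) :
    InArc p q v ↔ (((p:ℕ) ≤ q → (p:ℕ) ≤ v ∧ (v:ℕ) ≤ q) ∧ ((q:ℕ) < (p:ℕ) → (p:ℕ) ≤ v ∨ (v:ℕ) ≤ q)) := by
  simp only [InArc, Fin.le_def]
  split_ifs with h <;> omega

private lemma cross_of_sep {n : ℕ} (u v c d : Fin n)
    (hc : min (u:ℕ) (v:ℕ) < (c:ℕ) ∧ (c:ℕ) < max (u:ℕ) (v:ℕ))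
    (hd : (d:ℕ) < min (u:ℕ) (v:ℕ) ∨ max (u:ℕ) (v:ℕ) < (d:ℕ)) :
    Cross s(u, v) s(c, d) := by
  have flt : ∀ a b : Fin n, (a:ℕ) < (b:ℕ) → a < b := fun a b h => h
  rcases le_total (u:ℕ) (v:ℕ) with huv | huv
  · rcases hd with hd | hd
    · exact ⟨u, v, d, c, rfl, Sym2.eq_swap.symm, flt _ _ (by omega), flt _ _ (by omega),
        Or.inr ⟨flt _ _ (by omega), flt _ _ (by omega), flt _ _ (by omega)⟩⟩
    · exact ⟨u, v, c, d, rfl, rfl, flt _ _ (by omega), flt _ _ (by omega),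
        Or.inl ⟨flt _ _ (by omega), flt _ _ (by omega), flt _ _ (by omega)⟩⟩
  · rcases hd with hd | hd
    · exact ⟨v, u, d, c, Sym2.eq_swap.symm, Sym2.eq_swap.symm, flt _ _ (by omega), flt _ _ (by omega),
        Or.inr ⟨flt _ _ (by omega), flt _ _ (by omega), flt _ _ (by omega)⟩⟩
    · exact ⟨v, u, c, d, Sym2.eq_swap.symm, rfl, flt _ _ (by omega), flt _ _ (by omega),
        Or.inl ⟨flt _ _ (by omega), flt _ _ (by omega), flt _ _ (by omega)⟩⟩

private lemma border_of_adj {n : ℕ} (u v : Fin n) (h : ((u:ℕ) + 1) % n = (v:ℕ)) :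
    IsBorder s(u, v) := ⟨u, by rw [show next u = v from Fin.ext h]⟩

private lemma no_interior_component {n : ℕ} (x : ℕ → Fin n)
    (hinj : ∀ j k, j < n → k < n → x j = x k → j = k)
    (hsurj : ∀ w : Fin n, ∃ t, t < n ∧ x t = w)
    {i : ℕ} (hi : i + 1 < n) (S : Fin n → Prop)
    (h0 : ¬ S (x 0)) (hlast : ¬ S (x (n - 1)))
    (hu : ¬ S (x i)) (hv : ¬ S (x (i + 1)))
    (hw : ∃ w, S w)
    (H : ∀ j, j + 1 < n → ¬ (S (x j) ↔ S (x (j + 1))) →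
      x j = x i ∨ x j = x (i + 1) ∨ x (j + 1) = x i ∨ x (j + 1) = x (i + 1)) :
    False := by
  obtain ⟨w, hwS⟩ := hw
  obtain ⟨t, htn, rfl⟩ := hsurj w
  have ht0 : t ≠ 0 := fun h => h0 (h ▸ hwS)
  have htn1 : t ≠ n - 1 := fun h => hlast (h ▸ hwS)
  obtain ⟨j, hjt, hj1, hj2⟩ := exists_exit_bwd (fun k => S (x k)) t h0 hwS
  have hj3 : j + 1 < n := by omega
  have hji : j = i + 1 := by
    rcases H j hj3 (fun h => hj1 (h.mpr hj2)) with h | h | h | h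
    · have he : j = i := hinj j i (by omega) (by omega) h
      rw [he] at hj2; exact absurd hj2 hv
    · exact hinj j (i + 1) (by omega) (by omega) h
    · rw [h] at hj2; exact absurd hj2 hu
    · rw [h] at hj2; exact absurd hj2 hv
  have hti : i + 1 < t := by omega
  obtain ⟨k, hk1, hk2, hk3, hk4⟩ :=
    exists_exit_fwd (fun k => S (x k)) (n - 1 - t) t hwS
      (by rw [show t + (n - 1 - t) = n - 1 by omega]; exact hlast)
  have hk5 : k + 1 < n := by omega
  rcases H k hk5 (fun h => hk4 (h.mp hk3)) with h | h | h | h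
  · rw [h] at hk3; exact absurd hk3 hu
  · rw [h] at hk3; exact absurd hk3 hv
  · have := hinj (k + 1) i (by omega) (by omega) h; omega
  · have := hinj (k + 1) (i + 1) (by omega) (by omega) h; omega

/-- For a non-crossing Hamiltonian path `x 0, …, x (n-1)`, every edge of the path is
either a border edge, or has one endpoint in the closed top arc (from `x 0` to
`x (n-1)`) and the other in the closed bottom arc. -/
theorem path_edges_border_or_traversing {n : ℕ} (hn : 1 ≤ n)
    (x : ℕ → Fin n) (hx : Function.Bijective (fun j : Fin n => x (j : ℕ)))
    (hnc : ∀ i j : ℕ, i + 1 < n → j + 1 < n →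
      ¬ Cross s(x i, x (i + 1)) s(x j, x (j + 1))) :
    ∀ i : ℕ, i + 1 < n →
      IsBorder s(x i, x (i + 1)) ∨
        ((InArc (x 0) (x (n - 1)) (x i) ∧ InArc (x (n - 1)) (x 0) (x (i + 1))) ∨
         (InArc (x (n - 1)) (x 0) (x i) ∧ InArc (x 0) (x (n - 1)) (x (i + 1)))) := by
  intro i hi
  have hn2 : 2 ≤ n := by omega
  have hinj : ∀ j k, j < n → k < n → x j = x k → j = k := by
    intro j k hj hk h
    have h2 : (⟨j, hj⟩ : Fin n) = ⟨k, hk⟩ := hx.injective (a₁ := ⟨j, hj⟩) (a₂ := ⟨k, hk⟩) h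
    exact congrArg Fin.val h2
  have hsurj : ∀ w : Fin n, ∃ t, t < n ∧ x t = w := by
    intro w
    obtain ⟨j, hj⟩ := hx.surjective w
    exact ⟨j.val, j.isLt, hj⟩
  have hend : ∀ p q : Fin n, InArc p q p ∧ InArc p q q := by
    intro p q; rw [inArc_iff, inArc_iff]; omega
  have cover : ∀ w : Fin n, InArc (x 0) (x (n-1)) w ∨ InArc (x (n-1)) (x 0) w := by
    intro w
    have hne : ((x 0 : ℕ)) ≠ (x (n-1) : ℕ) := fun h => by
      have := hinj 0 (n-1) (by omega) (by omega) (Fin.ext h); omega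
    rw [inArc_iff, inArc_iff]; omega
  by_cases hi0 : i = 0
  · subst hi0
    rcases cover (x 1) with h | h
    · exact Or.inr (Or.inr ⟨(hend (x (n-1)) (x 0)).2, h⟩)
    · exact Or.inr (Or.inl ⟨(hend (x 0) (x (n-1))).1, h⟩)
  by_cases hi1 : i + 1 = n - 1
  · rw [hi1]
    rcases cover (x i) with h | h
    · exact Or.inr (Or.inl ⟨h, (hend (x (n-1)) (x 0)).1⟩)
    · exact Or.inr (Or.inr ⟨h, (hend (x 0) (x (n-1))).2⟩)
  by_contra hcon
  push_neg at hcon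
  obtain ⟨hnb, ht1, ht2⟩ := hcon
  rw [inArc_iff, inArc_iff] at ht1 ht2
  -- nat abbreviations
  have hUn : (x i : ℕ) < n := (x i).isLt
  have hVn : (x (i+1) : ℕ) < n := (x (i+1)).isLt
  have hAn : (x 0 : ℕ) < n := (x 0).isLt
  have hBn : (x (n-1) : ℕ) < n := (x (n-1)).isLt
  have hvne : ∀ j k, j < n → k < n → j ≠ k → (x j : ℕ) ≠ (x k : ℕ) :=
    fun j k hj hk hjk h => hjk (hinj j k hj hk (Fin.ext h))
  have dAB := hvne 0 (n-1) (by omega) (by omega) (by omega)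
  have dAU := hvne 0 i (by omega) (by omega) (by omega)
  have dAV := hvne 0 (i+1) (by omega) (by omega) (by omega)
  have dBU := hvne (n-1) i (by omega) (by omega) (by omega)
  have dBV := hvne (n-1) (i+1) (by omega) (by omega) (by omega)
  have dUV := hvne i (i+1) (by omega) (by omega) (by omega)
  set m := min (x i : ℕ) (x (i+1) : ℕ) with hm
  set M := max (x i : ℕ) (x (i+1) : ℕ) with hM
  have hcase : (¬(m < (x 0:ℕ) ∧ (x 0:ℕ) < M) ∧ ¬(m < (x (n-1):ℕ) ∧ (x (n-1):ℕ) < M)) ∨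
      ((m < (x 0:ℕ) ∧ (x 0:ℕ) < M) ∧ (m < (x (n-1):ℕ) ∧ (x (n-1):ℕ) < M)) := by omega
  rcases hcase with ⟨hA, hB⟩ | ⟨hA, hB⟩
  · -- inside interval S = (m, M)
    have hmM : m + 2 ≤ M := by
      by_contra h
      apply hnb
      rcases le_total (x i : ℕ) (x (i+1) : ℕ) with h' | h'
      · exact border_of_adj _ _ (by rw [Nat.mod_eq_of_lt (by omega)]; omega)
      · have hb := border_of_adj (x (i+1)) (x i) (by rw [Nat.mod_eq_of_lt (by omega)]; omega)
        rwa [Sym2.eq_swap]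
    refine no_interior_component x hinj hsurj hi (fun w => m < (w:ℕ) ∧ (w:ℕ) < M)
      (by omega) (by omega) (by omega) (by omega)
      ⟨⟨m + 1, by omega⟩, show m < m + 1 ∧ m + 1 < M by omega⟩ ?_
    intro j hj hsep
    by_contra hc
    push_neg at hc
    obtain ⟨h1, h2, h3, h4⟩ := hc
    have e1 : (x j : ℕ) ≠ (x i : ℕ) := fun h => h1 (Fin.ext h)
    have e2 : (x j : ℕ) ≠ (x (i+1) : ℕ) := fun h => h2 (Fin.ext h)
    have e3 : (x (j+1) : ℕ) ≠ (x i : ℕ) := fun h => h3 (Fin.ext h)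
    have e4 : (x (j+1) : ℕ) ≠ (x (i+1) : ℕ) := fun h => h4 (Fin.ext h)
    by_cases hS : m < (x j : ℕ) ∧ (x j : ℕ) < M
    · have hS' : ¬(m < (x (j+1) : ℕ) ∧ (x (j+1) : ℕ) < M) := fun h => hsep (iff_of_true hS h)
      exact hnc i j hi hj (cross_of_sep (x i) (x (i+1)) (x j) (x (j+1))
        (by omega) (by omega))
    · have hS' : m < (x (j+1) : ℕ) ∧ (x (j+1) : ℕ) < M := by
        by_contra h'
        exact hsep (iff_of_false hS h')
      have hcr := cross_of_sep (x i) (x (i+1)) (x (j+1)) (x j) (by omega) (by omega)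
      rw [Sym2.eq_swap (a := x (j+1))] at hcr
      exact hnc i j hi hj hcr
  · -- outside region S = [0,m) ∪ (M, n)
    have hwrap : ¬(m = 0 ∧ M + 1 = n) := by
      rintro ⟨hm0, hM1⟩
      apply hnb
      rcases le_total (x i : ℕ) (x (i+1) : ℕ) with h' | h'
      · have hb := border_of_adj (x (i+1)) (x i)
          (by rw [show (x (i+1):ℕ) + 1 = n by omega, Nat.mod_self]; omega)
        rwa [Sym2.eq_swap]
      · exact border_of_adj _ _ (by rw [show (x i:ℕ) + 1 = n by omega, Nat.mod_self]; omega)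
    have hwit : ∃ w : Fin n, (w:ℕ) < m ∨ M < (w:ℕ) := by
      by_cases hm0 : 0 < m
      · exact ⟨⟨0, by omega⟩, Or.inl (show (0:ℕ) < m from hm0)⟩
      · exact ⟨⟨n - 1, by omega⟩, Or.inr (show M < n - 1 by omega)⟩
    refine no_interior_component x hinj hsurj hi (fun w => (w:ℕ) < m ∨ M < (w:ℕ))
      (by omega) (by omega) (by omega) (by omega)
      hwit ?_
    intro j hj hsep
    by_contra hc
    push_neg at hc
    obtain ⟨h1, h2, h3, h4⟩ := hc
    have e1 : (x j : ℕ) ≠ (x i : ℕ) := fun h => h1 (Fin.ext h)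
    have e2 : (x j : ℕ) ≠ (x (i+1) : ℕ) := fun h => h2 (Fin.ext h)
    have e3 : (x (j+1) : ℕ) ≠ (x i : ℕ) := fun h => h3 (Fin.ext h)
    have e4 : (x (j+1) : ℕ) ≠ (x (i+1) : ℕ) := fun h => h4 (Fin.ext h)
    by_cases hS : (x j : ℕ) < m ∨ M < (x j : ℕ)
    · have hS' : ¬((x (j+1) : ℕ) < m ∨ M < (x (j+1) : ℕ)) := fun h => hsep (iff_of_true hS h)
      have hcr := cross_of_sep (x i) (x (i+1)) (x (j+1)) (x j) (by omega) (by omega)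
      rw [Sym2.eq_swap (a := x (j+1))] at hcr
      exact hnc i j hi hj hcr
    · have hS' : (x (j+1) : ℕ) < m ∨ M < (x (j+1) : ℕ) := by
        by_contra h'
        exact hsep (iff_of_false hS h')
      exact hnc i j hi hj (cross_of_sep (x i) (x (i+1)) (x j) (x (j+1)) (by omega) (by omega))
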